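/- In the ring of formal Laurent series expansions, ι_{X,Y}{(X-Y)^{-1}} · ι_{X,Z}{(X-Z)^{-1}} + ι_{X,Y}{(X-Y)^{-1}} · ι_{Z,Y}{(Z-Y)^{-1}} = ι_{X,Z}{(X-Z)^{-1}} · ι_{Z,Y}{(Z-Y)^{-1}}; equivalently, comparing coefficients: ∑_{i,j≥0} X^{-2-i-j} Y^i Z^j + ∑_{i,j≥0} X^{-1-i} Y^{i+j} Z^{-1-j} = ∑_{i,j≥0} X^{-1-i} Y^j Z^{i-j-1} as formal distributions in three variables. -/
import Mathlib

open Classical in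
/-- The three-variable partial fraction identity
`ι_{X,Y}{(X-Y)⁻¹}·ι_{X,Z}{(X-Z)⁻¹} + ι_{X,Y}{(X-Y)⁻¹}·ι_{Z,Y}{(Z-Y)⁻¹}
  = ι_{X,Z}{(X-Z)⁻¹}·ι_{Z,Y}{(Z-Y)⁻¹}`,
stated as the equality of the coefficients of `X^a Y^b Z^c` in the formal
distributions `∑_{i,j≥0} X^{-2-i-j} Y^i Z^j + ∑_{i,j≥0} X^{-1-i} Y^{i+j} Z^{-1-j}
  = ∑_{i,j≥0} X^{-1-i} Y^j Z^{i-j-1}`. -/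
theorem partial_fraction_formal_distribution_identity (a b c : ℤ) :
    ((if ∃ i j : ℕ, a = -2 - (i : ℤ) - (j : ℤ) ∧ b = (i : ℤ) ∧ c = (j : ℤ)
        then (1 : ℂ) else 0)
      + (if ∃ i j : ℕ, a = -1 - (i : ℤ) ∧ b = (i : ℤ) + (j : ℤ) ∧ c = -1 - (j : ℤ)
        then (1 : ℂ) else 0))
    = (if ∃ i j : ℕ, a = -1 - (i : ℤ) ∧ b = (j : ℤ) ∧ c = (i : ℤ) - (j : ℤ) - 1
        then (1 : ℂ) else 0) := by
  have h1 : (∃ i j : ℕ, a = -2 - (i : ℤ) - (j : ℤ) ∧ b = (i : ℤ) ∧ c = (j : ℤ)) ↔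
      (a + b + c = -2 ∧ 0 ≤ b ∧ 0 ≤ c) :=
    ⟨fun ⟨i, j, h⟩ => by omega, fun h => ⟨b.toNat, c.toNat, by omega⟩⟩
  have h2 : (∃ i j : ℕ, a = -1 - (i : ℤ) ∧ b = (i : ℤ) + (j : ℤ) ∧ c = -1 - (j : ℤ)) ↔
      (a + b + c = -2 ∧ a ≤ -1 ∧ c ≤ -1) :=
    ⟨fun ⟨i, j, h⟩ => by omega, fun h => ⟨(-1 - a).toNat, (-1 - c).toNat, by omega⟩⟩
  have h3 : (∃ i j : ℕ, a = -1 - (i : ℤ) ∧ b = (j : ℤ) ∧ c = (i : ℤ) - (j : ℤ) - 1) ↔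
      (a + b + c = -2 ∧ a ≤ -1 ∧ 0 ≤ b) :=
    ⟨fun ⟨i, j, h⟩ => by omega, fun h => ⟨(-1 - a).toNat, b.toNat, by omega⟩⟩
  simp only [h1, h2, h3]
  split_ifs <;> (try norm_num) <;> omega
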